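/- arXiv:2002.02228 — 2 statements merged into one kernel-verified Lean document; each statement's English description precedes it below -/
import Mathlib

section
/- A condensation of a guarded clause is a guarded clause, and a condensation of a loosely guarded clause is a loosely guarded clause. -/
/-!
Common formalization of first-order clausal logic (without equality), following
"Resolution-based query answering and rewriting for the (loosely) guarded fragment".
-/

set_option linter.unusedVariables false

namespace QGF

/-- Symbols: function symbols, constant symbols and predicate symbols, each indexed by ℕ. -/
inductive Head : Type
  | fn : ℕ → Head
  | cn : ℕ → Head
  | pr : ℕ → Head
  deriving DecidableEq

/-- First-order terms.  A constant `c` is represented as `Term.app (Head.cn c) []`. -/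
inductive Term : Type
  | var : ℕ → Term
  | app : Head → List Term → Term

namespace Term

def isVar : Term → Prop
  | var _ => True
  | _ => False

def isConst : Term → Prop
  | app (.cn _) [] => True
  | _ => False

/-- A compound term is a term that is neither a variable nor a constant. -/
def isCompound (t : Term) : Prop := ¬ t.isVar ∧ ¬ t.isConst

/-- Occurrence of a variable in a term. -/
inductive HasVar : Term → ℕ → Prop
  | var (x : ℕ) : HasVar (var x) x
  | app {h : Head} {ts : List Term} {x : ℕ} {t : Term} :
      t ∈ ts → HasVar t x → HasVar (app h ts) x

def vars (t : Term) : Set ℕ := {x | t.HasVar x}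

/-- Subterm relation. -/
inductive SubtermOf : Term → Term → Prop
  | refl (t : Term) : SubtermOf t t
  | app {s : Term} {h : Head} {ts : List Term} {t : Term} :
      t ∈ ts → SubtermOf s t → SubtermOf s (app h ts)

/-- Depth of a term: variables and constants have depth 0. -/
def depth : Term → ℕ
  | var _ => 0
  | app _ ts => (ts.attach.map fun t => depth t.1 + 1).foldr max 0
  decreasing_by
    have := List.sizeOf_lt_of_mem t.2
    simp only [Term.app.sizeOf_spec]
    omega

/-- Applying a substitution to a term. -/
def subst (σ : ℕ → Term) : Term → Term
  | var x => σ x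
  | app h ts => app h (ts.attach.map fun t => subst σ t.1)
  decreasing_by
    have := List.sizeOf_lt_of_mem t.2
    simp only [Term.app.sizeOf_spec]
    omega

def isGround (t : Term) : Prop := t.vars = ∅

/-- An argument is flat if it is a variable or a constant. -/
def flatArg (t : Term) : Prop := t.isVar ∨ t.isConst

/-- An argument is simple if it is a variable, a constant, or a compound term all of
whose arguments are variables or constants. -/
def simpleArg : Term → Prop
  | var _ => True
  | app _ ts => ∀ u ∈ ts, flatArg u

end Term

/-- Substitutions. -/
abbrev Subst := ℕ → Term

/-- Atoms. -/
structure Atom where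
  pred : ℕ
  args : List Term

namespace Atom

def subst (σ : Subst) (a : Atom) : Atom := ⟨a.pred, a.args.map (Term.subst σ)⟩

def vars (a : Atom) : Set ℕ := {x | ∃ t ∈ a.args, x ∈ t.vars}

def flat (a : Atom) : Prop := ∀ t ∈ a.args, t.flatArg

def simple (a : Atom) : Prop := ∀ t ∈ a.args, t.simpleArg

def ground (a : Atom) : Prop := a.vars = ∅

/-- An atom `P(t₁,…,tₙ)` viewed as the term with head the predicate symbol `P`. -/
def toTerm (a : Atom) : Term := .app (.pr a.pred) a.args

end Atom

/-- Literals. -/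
structure Lit where
  pos : Bool
  atom : Atom

def Lit.mkPos (a : Atom) : Lit := ⟨true, a⟩
def Lit.mkNeg (a : Atom) : Lit := ⟨false, a⟩

namespace Lit

def subst (σ : Subst) (L : Lit) : Lit := ⟨L.pos, L.atom.subst σ⟩

def vars (L : Lit) : Set ℕ := L.atom.vars

def ground (L : Lit) : Prop := L.vars = ∅

def flat (L : Lit) : Prop := L.atom.flat

def simple (L : Lit) : Prop := L.atom.simple

/-- Occurrence of a term in a literal (as a subterm of an argument). -/
def hasTerm (L : Lit) (t : Term) : Prop := ∃ u ∈ L.atom.args, t.SubtermOf u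

def hasCompound (L : Lit) : Prop := ∃ t, L.hasTerm t ∧ t.isCompound

/-- A literal is covering if every compound term occurring in it contains exactly the
variables of the literal. -/
def covering (L : Lit) : Prop := ∀ t, L.hasTerm t → t.isCompound → t.vars = L.vars

end Lit

/-- A clause is a (multi)set of literals, represented as a list, read disjunctively,
with all variables implicitly universally quantified. -/
abbrev Clause := List Lit

namespace Clause

def subst (σ : Subst) (C : Clause) : Clause := C.map (Lit.subst σ)

def vars (C : Clause) : Set ℕ := {x | ∃ L ∈ C, x ∈ L.vars}

def ground (C : Clause) : Prop := vars C = ∅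

def flat (C : Clause) : Prop := ∀ L ∈ C, L.flat

def simple (C : Clause) : Prop := ∀ L ∈ C, L.simple

def hasTerm (C : Clause) (t : Term) : Prop := ∃ L ∈ C, L.hasTerm t

/-- A clause is covering if every compound term occurring in it contains exactly the
variables of the clause. -/
def covering (C : Clause) : Prop := ∀ t, hasTerm C t → t.isCompound → t.vars = vars C

def hasNegCompound (C : Clause) : Prop := ∃ L ∈ C, L.pos = false ∧ L.hasCompound

def hasCompound (C : Clause) : Prop := ∃ L ∈ C, L.hasCompound

/-- The predicate symbols occurring in a clause. -/
def preds (C : Clause) : Set ℕ := {p | ∃ L ∈ C, L.atom.pred = p}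

/-- The depth of a clause: the maximal depth of a term occurring in it. -/
def depth (C : Clause) : ℕ :=
  (C.map fun L => (L.atom.args.map Term.depth).foldr max 0).foldr max 0

end Clause

/-- `L` is a guard of `C`:  a negative flat literal of `C` containing all variables of `C`. -/
def Lit.isGuardOf (L : Lit) (C : Clause) : Prop :=
  L ∈ C ∧ L.pos = false ∧ L.flat ∧ L.vars = Clause.vars C

/-- Guarded clauses (Definition 3.3). -/
def Clause.guarded (C : Clause) : Prop :=
  Clause.simple C ∧ Clause.covering C ∧ (Clause.ground C ∨ ∃ L : Lit, L.isGuardOf C)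

/-- `G` is a set of loose guards of `C`. -/
def Clause.looseGuardsOf (G : List Lit) (C : Clause) : Prop :=
  (∀ L ∈ G, L ∈ C ∧ L.pos = false ∧ L.flat) ∧
  (∀ x ∈ Clause.vars C, ∃ L ∈ G, x ∈ L.vars) ∧
  (∀ x ∈ Clause.vars C, ∀ y ∈ Clause.vars C, x ≠ y → ∃ L ∈ G, x ∈ L.vars ∧ y ∈ L.vars)

/-- Loosely guarded clauses (Definition 3.3). -/
def Clause.looselyGuarded (C : Clause) : Prop :=
  Clause.simple C ∧ Clause.covering C ∧
    (Clause.ground C ∨ ∃ G : List Lit, Clause.looseGuardsOf G C)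

/-- Query clauses: flat clauses containing only negative literals (Definition 3.2). -/
def Clause.query (C : Clause) : Prop := Clause.flat C ∧ ∀ L ∈ C, L.pos = false

/-! ### Semantics -/

/-- First-order interpretations. -/
structure Interp : Type 1 where
  dom : Type
  nonempty : Nonempty dom
  fn : Head → List dom → dom
  pr : ℕ → List dom → Prop

def Term.eval (I : Interp) (ν : ℕ → I.dom) : Term → I.dom
  | .var x => ν x
  | .app h ts => I.fn h (ts.attach.map fun t => Term.eval I ν t.1)
  decreasing_by
    have := List.sizeOf_lt_of_mem t.2
    simp only [Term.app.sizeOf_spec]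
    omega

def Atom.holds (I : Interp) (ν : ℕ → I.dom) (a : Atom) : Prop :=
  I.pr a.pred (a.args.map (Term.eval I ν))

def Lit.holds (I : Interp) (ν : ℕ → I.dom) (L : Lit) : Prop :=
  if L.pos then L.atom.holds I ν else ¬ L.atom.holds I ν

/-- A clause holds under a valuation if one of its literals does. -/
def Clause.holdsUnder (I : Interp) (ν : ℕ → I.dom) (C : Clause) : Prop :=
  ∃ L ∈ C, L.holds I ν

/-- A clause is true in an interpretation if its universal closure holds. -/
def Clause.trueIn (I : Interp) (C : Clause) : Prop := ∀ ν, Clause.holdsUnder I ν C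

def Interp.models (I : Interp) (N : Set Clause) : Prop := ∀ C ∈ N, Clause.trueIn I C

/-- Satisfiability of a set of clauses. -/
def satisfiable (N : Set Clause) : Prop := ∃ I : Interp, I.models N

/-- Logical consequence:  every model of `N` is a model of `C`. -/
def entails (N : Set Clause) (C : Clause) : Prop :=
  ∀ I : Interp, I.models N → Clause.trueIn I C

/-- A tautology is a clause true in every interpretation. -/
def Tautology (C : Clause) : Prop := ∀ (I : Interp) (ν : ℕ → I.dom), Clause.holdsUnder I ν C

/-- Two clauses are variants if each is an instance of the other. -/
def Variant (C D : Clause) : Prop :=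
  (∃ σ : Subst, Clause.subst σ C = D) ∧ (∃ ρ : Subst, Clause.subst ρ D = C)

/-! ### Unification -/

def Unifies (σ : Subst) (a b : Atom) : Prop := a.subst σ = b.subst σ

/-- Most general unifiers. -/
def IsMGU (σ : Subst) (a b : Atom) : Prop :=
  Unifies σ a b ∧ ∀ θ : Subst, Unifies θ a b → ∃ ρ : Subst, ∀ x, (σ x).subst ρ = θ x

def Lit.unifies (σ : Subst) (L1 L2 : Lit) : Prop := L1.subst σ = L2.subst σ

def Lit.isMGU (σ : Subst) (L1 L2 : Lit) : Prop :=
  Lit.unifies σ L1 L2 ∧ ∀ θ : Subst, Lit.unifies θ L1 L2 → ∃ ρ : Subst, ∀ x, (σ x).subst ρ = θ x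

def UnifiesAll (σ : Subst) (ps : List (Atom × Atom)) : Prop :=
  ∀ p ∈ ps, Atom.subst σ p.1 = Atom.subst σ p.2

/-- Simultaneous most general unifiers. -/
def IsSimMGU (σ : Subst) (ps : List (Atom × Atom)) : Prop :=
  UnifiesAll σ ps ∧ ∀ θ : Subst, UnifiesAll θ ps → ∃ ρ : Subst, ∀ x, (σ x).subst ρ = θ x

/-! ### Condensation, separability -/

/-- `D` is a subclause of `C` (as multisets). -/
def SubClause (D C : Clause) : Prop := (↑D : Multiset Lit) ≤ (↑C : Multiset Lit)

/-- `D` is a condensation of `C`: a proper subclause of `C` which is an instance of `C`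
(up to duplicate literals). -/
def IsCondensation (D C : Clause) : Prop :=
  SubClause D C ∧ D.length < C.length ∧
    ∃ σ : Subst, ∀ L : Lit, L ∈ D ↔ L ∈ Clause.subst σ C

/-- A clause `C ∨ D` is separable into `C` and `D` if both are non-empty and neither
variable set is included in the other. -/
def Separable (C D : Clause) : Prop :=
  C ≠ [] ∧ D ≠ [] ∧ ¬ Clause.vars C ⊆ Clause.vars D ∧ ¬ Clause.vars D ⊆ Clause.vars C

/-- A clause is indecomposable if it cannot be partitioned into two non-empty
variable-disjoint subclauses. -/
def Clause.indecomposable (C : Clause) : Prop :=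
  ¬ ∃ D E : Clause, D ≠ [] ∧ E ≠ [] ∧
      (↑C : Multiset Lit) = (↑D : Multiset Lit) + (↑E : Multiset Lit) ∧
      Clause.vars D ∩ Clause.vars E = ∅

/-- The predicate symbols occurring in a clause set. -/
def SetPreds (N : Set Clause) : Set ℕ := {p | ∃ C ∈ N, p ∈ Clause.preds C}

/-! ### Orderings -/

namespace Head

def rank : Head → ℕ
  | .pr _ => 0
  | .cn _ => 1
  | .fn _ => 2

def idx : Head → ℕ
  | .pr n => n
  | .cn n => n
  | .fn n => n

/-- The precedence: every function symbol is greater than every constant, and every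
constant is greater than every predicate symbol. -/
def prec (g h : Head) : Prop := g.rank < h.rank ∨ (g.rank = h.rank ∧ g.idx < h.idx)

end Head

/-- The lexicographic path ordering on terms induced by the precedence `Head.prec`.
`LpoGT s t` means `s ≻_lpo t`. -/
inductive LpoGT : Term → Term → Prop
  | subRefl {h : Head} {ss : List Term} {t : Term} :
      t ∈ ss → LpoGT (.app h ss) t
  | sub {h : Head} {ss : List Term} {t : Term} (s : Term) :
      s ∈ ss → LpoGT s t → LpoGT (.app h ss) t
  | prec {h g : Head} {ss ts : List Term} :
      Head.prec g h → (∀ t ∈ ts, LpoGT (.app h ss) t) → LpoGT (.app h ss) (.app g ts)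
  | lex {h : Head} {ss ts u ss' ts' : List Term} {s t : Term} :
      ss = u ++ s :: ss' → ts = u ++ t :: ts' → LpoGT s t →
      (∀ t' ∈ ts, LpoGT (.app h ss) t') → LpoGT (.app h ss) (.app h ts)

/-- The induced lexicographic path ordering on literals, where a negative literal is
greater than the corresponding positive literal. -/
def Lit.lpoGT (L1 L2 : Lit) : Prop :=
  LpoGT L1.atom.toTerm L2.atom.toTerm ∨
    (L1.atom.toTerm = L2.atom.toTerm ∧ L1.pos = false ∧ L2.pos = true)

/-- Admissible orderings on literals; `ord L L'` means `L ≻ L'`. -/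
structure Admissible (ord : Lit → Lit → Prop) : Prop where
  trans : ∀ {a b c : Lit}, ord a b → ord b c → ord a c
  irrefl : ∀ a : Lit, ¬ ord a a
  totalGround : ∀ a b : Lit, a.ground → b.ground → a = b ∨ ord a b ∨ ord b a
  wfGround : WellFounded fun a b : Lit => a.ground ∧ b.ground ∧ ord b a
  liftable : ∀ (a b : Lit) (σ : Subst), ord a b → ord (a.subst σ) (b.subst σ)
  negGtPos : ∀ a : Atom, a.ground → ord (Lit.mkNeg a) (Lit.mkPos a)
  negCompat : ∀ a b : Atom, a.ground → b.ground →
    ord (Lit.mkPos b) (Lit.mkPos a) → ord (Lit.mkPos b) (Lit.mkNeg a)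

/-- The multiset extension of a literal ordering to clauses; `ClauseGT ord C D` means
`C ≻ D`. -/
def ClauseGT (ord : Lit → Lit → Prop) (C D : Clause) : Prop :=
  ∃ X Y Z : Multiset Lit,
    (↑C : Multiset Lit) = Z + X ∧ (↑D : Multiset Lit) = Z + Y ∧ X ≠ 0 ∧
      ∀ y ∈ Y, ∃ x ∈ X, ord x y

/-- `L` is maximal with respect to a clause `C` (`C` not necessarily containing `L`):
some ground instance of `L` is not smaller than the corresponding instances of the
literals of `C`. -/
def maxIn (ord : Lit → Lit → Prop) (L : Lit) (C : Clause) : Prop :=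
  ∃ σ : Subst, Lit.ground (L.subst σ) ∧ Clause.ground (Clause.subst σ C) ∧
    ∀ L' ∈ C, ¬ ord (Lit.subst σ L') (Lit.subst σ L)

/-- `L` is strictly maximal with respect to a clause `C`. -/
def strictMaxIn (ord : Lit → Lit → Prop) (L : Lit) (C : Clause) : Prop :=
  ∃ σ : Subst, Lit.ground (L.subst σ) ∧ Clause.ground (Clause.subst σ C) ∧
    ∀ L' ∈ C, ord (Lit.subst σ L) (Lit.subst σ L')

/-! ### Redundancy -/

def GroundInstanceOf (D C : Clause) : Prop := (∃ σ : Subst, D = Clause.subst σ C) ∧ Clause.ground D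

/-- Redundancy of a clause with respect to a clause set `N`:  every ground instance is
entailed by finitely many smaller ground instances of clauses of `N`. -/
def redundantClause (ord : Lit → Lit → Prop) (N : Set Clause) (C : Clause) : Prop :=
  ∀ D : Clause, GroundInstanceOf D C →
    ∃ S : Finset Clause, (∀ E ∈ S, ∃ C' ∈ N, GroundInstanceOf E C') ∧
      entails (↑S) D ∧ ∀ E ∈ S, ClauseGT ord D E

/-- An inference is redundant in `N` if a premise is redundant, or its conclusion is
redundant in `N` or belongs to `N`. -/
def RedundantInference (ord : Lit → Lit → Prop) (N : Set Clause)
    (premises : List Clause) (concl : Clause) : Prop :=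
  (∃ p ∈ premises, redundantClause ord N p) ∨ redundantClause ord N concl ∨ concl ∈ N

/-! ### Selection and eligibility -/

/-- Selection functions: select a set of negative literals of a clause. -/
def SelFn := Clause → Set Lit

def SelOK (sel : SelFn) : Prop := ∀ C : Clause, ∀ L ∈ sel C, L ∈ C ∧ L.pos = false

/-- A literal is eligible if it is selected, or nothing is selected and it is maximal. -/
def Eligible (ord : Lit → Lit → Prop) (sel : SelFn) (C : Clause) (L : Lit) : Prop :=
  (sel C = ∅ ∧ L ∈ C ∧ maxIn ord L C) ∨ L ∈ sel C

/-- Eligibility under the refinement T-Refine (Algorithm 1), in the cases not depending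
on side premises:  maximal literals for ground clauses and clauses with positive
compound terms, a selected negative compound-term literal, or a selected guard. -/
def EligibleTR (C : Clause) (L : Lit) : Prop :=
  L ∈ C ∧
    ((Clause.ground C ∧ maxIn Lit.lpoGT L C) ∨
     (¬ Clause.ground C ∧ Clause.hasNegCompound C ∧ L.pos = false ∧ L.hasCompound) ∨
     (¬ Clause.ground C ∧ ¬ Clause.hasNegCompound C ∧ Clause.hasCompound C ∧
        maxIn Lit.lpoGT L C) ∨
     (¬ Clause.ground C ∧ ¬ Clause.hasCompound C ∧ L.isGuardOf C))

/-! ### Top-variable resolution -/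

/-- `x` is a top variable of the negative atoms `A i` with respect to the candidate
unifier `σ'`:  the depth of `σ' x` is maximal. -/
def IsTopVar (n : ℕ) (A : Fin n → Atom) (σ' : Subst) (x : ℕ) : Prop :=
  (∃ i, x ∈ (A i).vars) ∧
    ∀ y : ℕ, (∃ i, y ∈ (A i).vars) → (σ' y).depth ≤ (σ' x).depth

/-- The data of an application of the top-variable resolution rule TRes:
main premise `¬A₁ ∨ … ∨ ¬Aₙ ∨ D`,  side premises `Bᵢ ∨ Dᵢ`,
`σ'` a simultaneous mgu of all `n` pairs used to compute top variables, and
`σ` a simultaneous mgu of the first `m` (top-variable) pairs. -/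
structure TResApp where
  n : ℕ
  m : ℕ
  A : Fin n → Atom
  B : Fin n → Atom
  Ds : Fin n → Clause
  D : Clause
  σ' : Subst
  σ : Subst

namespace TResApp

def mainPremise (t : TResApp) : Clause :=
  (List.ofFn fun i => Lit.mkNeg (t.A i)) ++ t.D

def sidePremise (t : TResApp) (i : Fin t.n) : Clause :=
  Lit.mkPos (t.B i) :: t.Ds i

def sidePremises (t : TResApp) : List Clause := List.ofFn t.sidePremise

def resolvent (t : TResApp) : Clause :=
  Clause.subst t.σ
    ((((List.finRange t.n).filter fun i => i.1 < t.m).flatMap t.Ds) ++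
     (((List.finRange t.n).filter fun i => t.m ≤ i.1).map fun i => Lit.mkNeg (t.A i)) ++
     t.D)

/-- Side conditions of the TRes rule. -/
def wf (ord : Lit → Lit → Prop) (t : TResApp) : Prop :=
  0 < t.m ∧ t.m ≤ t.n ∧
  (∀ L ∈ t.D, L.pos = true) ∧
  IsSimMGU t.σ' ((List.finRange t.n).map fun i => (t.A i, t.B i)) ∧
  IsSimMGU t.σ (((List.finRange t.n).filter fun i => i.1 < t.m).map fun i => (t.A i, t.B i)) ∧
  (∀ i : Fin t.n, i.1 < t.m ↔ ∃ x, IsTopVar t.n t.A t.σ' x ∧ x ∈ (t.A i).vars) ∧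
  (∀ i, strictMaxIn ord (Lit.mkPos (t.B i)) (t.Ds i)) ∧
  (∀ i, Clause.vars (t.sidePremise i) ∩ Clause.vars t.mainPremise = ∅) ∧
  (∀ i j, i ≠ j → Clause.vars (t.sidePremise i) ∩ Clause.vars (t.sidePremise j) = ∅)

end TResApp

/-! ### The generating inferences of T-Inf -/

/-- The conclusion-generating inferences of the top-variable inference system T-Inf:
ordered resolution with selection (Res), ordered factoring (Fact), and top-variable
resolution (TRes). `TInfInf ord sel ps c` means `c` is the conclusion of an inference
with premises `ps`. -/
inductive TInfInf (ord : Lit → Lit → Prop) (sel : SelFn) : List Clause → Clause → Prop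
  | res {B A : Atom} {D1 D : Clause} {σ : Subst} :
      IsMGU σ A B →
      sel (Lit.mkPos B :: D1) = ∅ →
      strictMaxIn ord (Lit.mkPos B) D1 →
      Eligible ord sel (Lit.mkNeg A :: D) (Lit.mkNeg A) →
      Clause.vars (Lit.mkPos B :: D1) ∩ Clause.vars (Lit.mkNeg A :: D) = ∅ →
      TInfInf ord sel [Lit.mkPos B :: D1, Lit.mkNeg A :: D] (Clause.subst σ (D1 ++ D))
  | fact {A1 A2 : Atom} {C : Clause} {σ : Subst} :
      IsMGU σ A1 A2 →
      sel (C ++ [Lit.mkPos A1, Lit.mkPos A2]) = ∅ →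
      maxIn ord (Lit.mkPos A1) (C ++ [Lit.mkPos A2]) →
      TInfInf ord sel [C ++ [Lit.mkPos A1, Lit.mkPos A2]] (Clause.subst σ (C ++ [Lit.mkPos A1]))
  | tres (t : TResApp) :
      t.wf ord →
      (∀ i, sel (t.sidePremise i) = ∅) →
      (∀ i : Fin t.n, i.1 < t.m → Lit.mkNeg (t.A i) ∈ sel t.mainPremise) →
      TInfInf ord sel (t.sidePremises ++ [t.mainPremise]) t.resolvent

/-- `N` is saturated up to redundancy with respect to the inference system `inf`:
every inference from non-redundant premises of `N` is redundant in `N`. -/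
def SaturatedUpToRedundancy (ord : Lit → Lit → Prop)
    (inf : List Clause → Clause → Prop) (N : Set Clause) : Prop :=
  ∀ (ps : List Clause) (c : Clause), inf ps c → (∀ p ∈ ps, p ∈ N) →
    RedundantInference ord N ps c


/-! ### Surface literals, chained and isolated variables of query clauses -/

/-- `L` is a surface literal of `Q`: no other literal of `Q` has a strictly larger
variable set. -/
def SurfaceLit (Q : Clause) (L : Lit) : Prop :=
  L ∈ Q ∧ ∀ L' ∈ Q, ¬ (L.vars ⊂ L'.vars)

/-- `x` is a chained variable of `Q`: it occurs in two distinct surface literals with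
different, mutually non-inclusive variable sets. -/
def ChainedVar (Q : Clause) (x : ℕ) : Prop :=
  ∃ L L' : Lit, SurfaceLit Q L ∧ SurfaceLit Q L' ∧ L ≠ L' ∧
    ¬ L.vars ⊆ L'.vars ∧ ¬ L'.vars ⊆ L.vars ∧ x ∈ L.vars ∧ x ∈ L'.vars

/-- `x` is an isolated variable of `Q`: a variable of `Q` that is not chained. -/
def IsolatedVar (Q : Clause) (x : ℕ) : Prop := x ∈ Clause.vars Q ∧ ¬ ChainedVar Q x

/-- A query clause is isolated-only if all its variables are isolated. -/
def Clause.isolatedOnly (Q : Clause) : Prop := ∀ x ∈ Clause.vars Q, ¬ ChainedVar Q x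

/-- A query clause is chained-only if all its variables are chained. -/
def Clause.chainedOnly (Q : Clause) : Prop := ∀ x ∈ Clause.vars Q, ChainedVar Q x

/-! ### The inferences of Q-AR -/

/-- The inferences of Q-AR: the T-Inf inferences together with the separation
inferences (Sep) and the T-Trans renaming inferences, both introducing fresh,
smaller definer predicate symbols. -/
inductive QARInf (ord : Lit → Lit → Prop) (sel : SelFn) : List Clause → Clause → Prop
  | tinf {ps : List Clause} {c : Clause} : TInfInf ord sel ps c → QARInf ord sel ps c
  | sepL {C D : Clause} {ds : ℕ} {xs : List ℕ} :
      Separable C D → {x | x ∈ xs} = Clause.vars C ∩ Clause.vars D →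
      ds ∉ Clause.preds (C ++ D) →
      QARInf ord sel [C ++ D] (Lit.mkNeg ⟨ds, xs.map Term.var⟩ :: C)
  | sepR {C D : Clause} {ds : ℕ} {xs : List ℕ} :
      Separable C D → {x | x ∈ xs} = Clause.vars C ∩ Clause.vars D →
      ds ∉ Clause.preds (C ++ D) →
      QARInf ord sel [C ++ D] (Lit.mkPos ⟨ds, xs.map Term.var⟩ :: D)
  | ttransDef {E F : Clause} {d : ℕ} {xs : List ℕ} :
      {x | x ∈ xs} = Clause.vars E → d ∉ Clause.preds (F ++ E) →
      QARInf ord sel [F ++ E] (Lit.mkPos ⟨d, xs.map Term.var⟩ :: E)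
  | ttransQ {E F : Clause} {d : ℕ} {xs : List ℕ} :
      {x | x ∈ xs} = Clause.vars E → d ∉ Clause.preds (F ++ E) →
      QARInf ord sel [F ++ E] (F ++ [Lit.mkNeg ⟨d, xs.map Term.var⟩])

/-! ### Q-AR as a transition system on clause sets -/

/-- A single derivation step of the procedure Q-AR on clause sets: adding a
Res/TRes/Fact conclusion, replacement by a condensation, deletion of tautologies and
variants, separation (Sep) and the renaming T-Trans (both with fresh definer
predicate symbols). -/
inductive QARStep : Set Clause → Set Clause → Prop
  | res {N : Set Clause} {A B : Atom} {D1 D : Clause} {σ : Subst} :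
      (Lit.mkPos B :: D1) ∈ N → (Lit.mkNeg A :: D) ∈ N → IsMGU σ A B →
      QARStep N (insert (Clause.subst σ (D1 ++ D)) N)
  | tres {N : Set Clause} (t : TResApp) :
      (∀ i, t.sidePremise i ∈ N) → t.mainPremise ∈ N →
      (∀ i : Fin t.n, i.1 < t.m → Atom.subst t.σ (t.A i) = Atom.subst t.σ (t.B i)) →
      QARStep N (insert t.resolvent N)
  | fact {N : Set Clause} {A1 A2 : Atom} {C : Clause} {σ : Subst} :
      (C ++ [Lit.mkPos A1, Lit.mkPos A2]) ∈ N → IsMGU σ A1 A2 →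
      QARStep N (insert (Clause.subst σ (C ++ [Lit.mkPos A1])) N)
  | conden {N : Set Clause} {C D : Clause} :
      C ∈ N → IsCondensation D C → QARStep N (insert D (N \ {C}))
  | deleteTaut {N : Set Clause} {C : Clause} :
      C ∈ N → Tautology C → QARStep N (N \ {C})
  | deleteVariant {N : Set Clause} {C C' : Clause} :
      C ∈ N → C' ∈ N → C ≠ C' → Variant C C' → QARStep N (N \ {C})
  | sep {N : Set Clause} {C D : Clause} {ds : ℕ} {xs : List ℕ} :
      (C ++ D) ∈ N → Separable C D → {x | x ∈ xs} = Clause.vars C ∩ Clause.vars D →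
      ds ∉ SetPreds N →
      QARStep N (insert (Lit.mkNeg ⟨ds, xs.map Term.var⟩ :: C)
        (insert (Lit.mkPos ⟨ds, xs.map Term.var⟩ :: D) (N \ {C ++ D})))
  | ttrans {N : Set Clause} {E F : Clause} {d : ℕ} {xs : List ℕ} :
      (F ++ E) ∈ N → {x | x ∈ xs} = Clause.vars E → d ∉ SetPreds N →
      QARStep N (insert (F ++ [Lit.mkNeg ⟨d, xs.map Term.var⟩])
        (insert (Lit.mkPos ⟨d, xs.map Term.var⟩ :: E) (N \ {F ++ E})))

/-! ### Auxiliary lemmas for condensation -/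

theorem Term.subst_var (σ : Subst) (z : ℕ) : Term.subst σ (.var z) = σ z := by
  rw [Term.subst]

theorem Term.subst_app' (σ : Subst) (h : Head) (ts : List Term) :
    Term.subst σ (.app h ts) = .app h (ts.map (Term.subst σ)) := by
  rw [Term.subst]
  congr 1
  simp [List.map_attach_eq_pmap]

theorem Term.hasVar_subst (σ : Subst) : ∀ (u : Term) (x : ℕ),
    ((u.subst σ).HasVar x ↔ ∃ y, u.HasVar y ∧ (σ y).HasVar x)
  | .var z, x => by
      rw [Term.subst_var]
      constructor
      · intro h; exact ⟨z, .var z, h⟩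
      · rintro ⟨y, hy, h2⟩; cases hy; exact h2
  | .app h ts, x => by
      rw [Term.subst_app']
      constructor
      · intro hv
        cases hv with
        | app hmem hv =>
          rename_i t
          rcases List.mem_map.1 hmem with ⟨u, hu, rfl⟩
          rcases (Term.hasVar_subst σ u x).1 hv with ⟨y, hy, h2⟩
          exact ⟨y, .app hu hy, h2⟩
      · rintro ⟨y, hy, h2⟩
        have hm : ∃ u ∈ ts, u.HasVar y := by
          cases hy with | app hm hv => exact ⟨_, hm, hv⟩
        rcases hm with ⟨u, hu, hy2⟩
        exact .app (List.mem_map_of_mem hu)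
          ((Term.hasVar_subst σ u x).2 ⟨y, hy2, h2⟩)
  termination_by u x => sizeOf u
  decreasing_by
    all_goals (have := List.sizeOf_lt_of_mem hu; simp only [Term.app.sizeOf_spec]; omega)

theorem Term.hasVar_of_subterm {t u : Term} {x : ℕ}
    (h : Term.SubtermOf t u) : t.HasVar x → u.HasVar x := by
  induction h with
  | refl => exact fun hv => hv
  | app hmem _ ih => exact fun hv => .app hmem (ih hv)

theorem Term.subterm_subst (σ : Subst) {t u : Term}
    (h : Term.SubtermOf t u) : Term.SubtermOf (t.subst σ) (u.subst σ) := by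
  induction h with
  | refl => exact .refl _
  | app hmem _ ih =>
      rw [Term.subst_app']
      exact .app (List.mem_map_of_mem hmem) ih

theorem Term.subterm_of_hasVar (σ : Subst) {u : Term} {x : ℕ}
    (h : u.HasVar x) : Term.SubtermOf (σ x) (u.subst σ) := by
  induction h with
  | var z => rw [Term.subst_var]; exact .refl _
  | app hmem _ ih =>
      rw [Term.subst_app']
      exact .app (List.mem_map_of_mem hmem) ih

theorem Term.eq_of_subterm_flat {t u : Term} (hf : u.flatArg)
    (h : Term.SubtermOf t u) : t = u := by
  cases h with
  | refl => rfl
  | app hmem hsub =>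
      rcases hf with hv | hc
      · simp [Term.isVar] at hv
      · rename_i h' ts _
        cases h' <;> cases ts <;> simp [Term.isConst] at hc <;> simp at hmem

theorem Term.flat_hasVar {v : Term} {x : ℕ} (hf : v.flatArg) (hv : v.HasVar x) :
    v = .var x := by
  cases v with
  | var z => cases hv; rfl
  | app h ts =>
      rcases hf with h1 | h2
      · simp [Term.isVar] at h1
      · cases h <;> cases ts <;> simp [Term.isConst] at h2 <;>
          · cases hv with | app hmem _ => simp at hmem

theorem Term.not_flat_of_compound {t : Term} (h : t.isCompound) : ¬ t.flatArg := by
  rintro (h1 | h2)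
  · exact h.1 h1
  · exact h.2 h2

theorem Term.simpleArg_of_subterm {t u : Term} (hs : u.simpleArg)
    (h : Term.SubtermOf t u) (hc : t.isCompound) : t.simpleArg := by
  cases h with
  | refl => exact hs
  | app hmem hsub =>
      have hflat : Term.flatArg _ := hs _ hmem
      have := Term.eq_of_subterm_flat hflat hsub
      subst this
      exact absurd hflat (Term.not_flat_of_compound hc)

theorem Lit.mem_vars_subst {σ : Subst} {L : Lit} {x : ℕ} :
    x ∈ (Lit.subst σ L).vars ↔ ∃ y ∈ L.vars, (σ y).HasVar x := by
  simp only [Lit.subst, Lit.vars, Atom.subst, Atom.vars, Set.mem_setOf_eq,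
    List.mem_map, Term.vars]
  constructor
  · rintro ⟨t, ⟨u, hu, rfl⟩, hx⟩
    rcases (Term.hasVar_subst σ u x).1 hx with ⟨y, hy, h2⟩
    exact ⟨y, ⟨u, hu, hy⟩, h2⟩
  · rintro ⟨y, ⟨u, hu, hy⟩, h2⟩
    exact ⟨u.subst σ, ⟨u, hu, rfl⟩, (Term.hasVar_subst σ u x).2 ⟨y, hy, h2⟩⟩

theorem Term.app_compound {h : Head} {ts : List Term} (hne : ts ≠ []) :
    (Term.app h ts).isCompound := by
  refine ⟨fun hv => hv, fun hc => ?_⟩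
  cases h <;> cases ts <;> first
    | exact hne rfl
    | simp [Term.isConst] at hc

theorem Term.flat_subst {σ : Subst} {u : Term} (hf : u.flatArg)
    (hv : ∀ z, u = .var z → (σ z).flatArg) : (u.subst σ).flatArg := by
  cases u with
  | var z => rw [Term.subst_var]; exact hv z rfl
  | app h ts =>
      rcases hf with h1 | h2
      · exact absurd h1 id
      · cases h <;> cases ts <;> simp [Term.isConst] at h2 <;>
          (rw [Term.subst_app']; right; simp [Term.isConst])

theorem mem_clause_vars {C : Clause} {x : ℕ} :
    x ∈ Clause.vars C ↔ ∃ L ∈ C, x ∈ L.vars := Iff.rfl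

theorem mem_lit_vars {L : Lit} {x : ℕ} :
    x ∈ L.vars ↔ ∃ t ∈ L.atom.args, t.HasVar x := Iff.rfl

theorem clause_hasTerm_iff {C : Clause} {t : Term} :
    Clause.hasTerm C t ↔ ∃ L ∈ C, ∃ u ∈ L.atom.args, t.SubtermOf u := Iff.rfl

theorem Lit.flat_subst {σ : Subst} {L : Lit} (hf : L.flat)
    (hv : ∀ z ∈ L.vars, (σ z).flatArg) : (Lit.subst σ L).flat := by
  intro t ht
  simp only [Lit.subst, Atom.subst] at ht
  rcases List.mem_map.1 ht with ⟨u, hu, rfl⟩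
  refine Term.flat_subst (hf u hu) ?_
  rintro z rfl
  exact hv z (mem_lit_vars.2 ⟨Term.var z, hu, Term.HasVar.var z⟩)

theorem cond_key {C D : Clause} {σ : Subst}
    (hsub : ∀ L ∈ D, L ∈ C)
    (hσ : ∀ L : Lit, L ∈ D ↔ L ∈ Clause.subst σ C)
    (hsimp : Clause.simple C) (hcov : Clause.covering C) :
    ∀ x ∈ Clause.vars C, (σ x).flatArg := by
  intro x hx
  by_contra hflat
  have hcomp : (σ x).isCompound :=
    ⟨fun h => hflat (Or.inl h), fun h => hflat (Or.inr h)⟩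
  have hx' := hx
  rcases mem_clause_vars.1 hx with ⟨M, hM, hxM⟩
  rcases mem_lit_vars.1 hxM with ⟨u, hu, hux⟩
  have hinD : ∀ L ∈ C, Lit.subst σ L ∈ D :=
    fun L hL => (hσ _).2 (List.mem_map_of_mem hL)
  have hinC : ∀ L ∈ C, Lit.subst σ L ∈ C := fun L hL => hsub _ (hinD L hL)
  have hst : Term.SubtermOf (σ x) (u.subst σ) := Term.subterm_of_hasVar σ hux
  have harg : u.subst σ ∈ (Lit.subst σ M).atom.args := by
    simp only [Lit.subst, Atom.subst]
    exact List.mem_map_of_mem hu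
  have hMσC : Lit.subst σ M ∈ C := hinC M hM
  have hterm : Clause.hasTerm C (σ x) :=
    clause_hasTerm_iff.2 ⟨_, hMσC, _, harg, hst⟩
  have hvars := hcov _ hterm hcomp
  have hvx : (σ x).HasVar x := by
    have : x ∈ (σ x).vars := by rw [hvars]; exact hx'
    exact this
  have hsimp1 : (σ x).simpleArg :=
    Term.simpleArg_of_subterm (hsimp _ hMσC _ harg) hst hcomp
  rcases hE : σ x with z | ⟨h, ts⟩
  · rw [hE] at hcomp; exact hcomp.1 trivial
  · rw [hE] at hvx hsimp1 hst
    have hm : ∃ v ∈ ts, v.HasVar x := by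
      cases hvx with | app hm hv => exact ⟨_, hm, hv⟩
    obtain ⟨v, hv, hvx2⟩ := hm
    have hvflat : v.flatArg := hsimp1 v hv
    have hveq : v = .var x := Term.flat_hasVar hvflat hvx2
    have hsub' : Term.SubtermOf ((Term.app h ts).subst σ) ((u.subst σ).subst σ) :=
      Term.subterm_subst σ hst
    have harg2 : (u.subst σ).subst σ ∈ (Lit.subst σ (Lit.subst σ M)).atom.args := by
      simp only [Lit.subst, Atom.subst]
      exact List.mem_map_of_mem (List.mem_map_of_mem hu)
    have hMσ2C : Lit.subst σ (Lit.subst σ M) ∈ C := hinC _ hMσC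
    have hcomp2 : ((Term.app h ts).subst σ).isCompound := by
      rw [Term.subst_app']
      exact Term.app_compound (by
        intro he
        exact List.ne_nil_of_mem hv (List.map_eq_nil_iff.1 he))
    have hsimp2 : ((Term.app h ts).subst σ).simpleArg :=
      Term.simpleArg_of_subterm (hsimp _ hMσ2C _ harg2) hsub' hcomp2
    have hfl : Term.flatArg (Term.subst σ (.var x)) := by
      rw [Term.subst_app'] at hsimp2
      exact hsimp2 _ (List.mem_map_of_mem (hveq ▸ hv))
    rw [Term.subst_var, hE] at hfl
    exact hflat (hE ▸ hfl)

theorem cond_vars_char {C D : Clause} {σ : Subst}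
    (hsub : ∀ L ∈ D, L ∈ C)
    (hσ : ∀ L : Lit, L ∈ D ↔ L ∈ Clause.subst σ C)
    (hsimp : Clause.simple C) (hcov : Clause.covering C) :
    ∀ x, x ∈ Clause.vars D ↔ ∃ z ∈ Clause.vars C, σ z = Term.var x := by
  have key := cond_key hsub hσ hsimp hcov
  have hinD : ∀ L ∈ C, Lit.subst σ L ∈ D :=
    fun L hL => (hσ _).2 (List.mem_map_of_mem hL)
  intro x
  constructor
  · intro hx
    rcases mem_clause_vars.1 hx with ⟨L, hL, hxL⟩
    rcases List.mem_map.1 ((hσ L).1 hL) with ⟨M, hM, rfl⟩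
    rcases Lit.mem_vars_subst.1 hxL with ⟨y, hyM, hyx⟩
    have hyC : y ∈ Clause.vars C := mem_clause_vars.2 ⟨M, hM, hyM⟩
    rcases hE : σ y with z | ⟨h, ts⟩
    · rw [hE] at hyx; cases hyx; exact ⟨y, hyC, hE⟩
    · exfalso
      rcases key y hyC with h1 | h2
      · rw [hE] at h1; exact h1
      · rw [hE] at h2 hyx
        cases hyx with
        | app hm _ =>
          cases h <;> cases ts <;> first
            | exact absurd hm List.not_mem_nil
            | simp [Term.isConst] at h2
  · rintro ⟨z, hzC, hz⟩
    rcases mem_clause_vars.1 hzC with ⟨M, hM, hzM⟩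
    exact mem_clause_vars.2 ⟨Lit.subst σ M, hinD M hM,
      Lit.mem_vars_subst.2 ⟨z, hzM, by rw [hz]; exact .var x⟩⟩

/-- Lemma D.2:  A condensation of a guarded clause is a guarded clause,
and a condensation of a loosely guarded clause is a loosely guarded clause. -/
theorem condensation_preserves_guardedness (C D : Clause) (hcond : IsCondensation D C) :
    (Clause.guarded C → Clause.guarded D) ∧
    (Clause.looselyGuarded C → Clause.looselyGuarded D) := by
  obtain ⟨hsubm, hlen, σ, hσ⟩ := hcond
  have hsub : ∀ L ∈ D, L ∈ C := fun L hL =>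
    Multiset.mem_coe.1 (Multiset.mem_of_le hsubm (Multiset.mem_coe.2 hL))
  have hinD : ∀ L ∈ C, Lit.subst σ L ∈ D :=
    fun L hL => (hσ _).2 (List.mem_map_of_mem hL)
  have hvarsDC : Clause.vars D ⊆ Clause.vars C := by
    intro x hx
    rcases mem_clause_vars.1 hx with ⟨L, hL, hxL⟩
    exact mem_clause_vars.2 ⟨L, hsub L hL, hxL⟩
  have hcovD : Clause.simple C → Clause.covering C → Clause.covering D := by
    intro hsimpC hcovC t ht htc
    rcases clause_hasTerm_iff.1 ht with ⟨L, hL, u, hu, hst⟩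
    have htC : Clause.hasTerm C t := clause_hasTerm_iff.2 ⟨L, hsub L hL, u, hu, hst⟩
    have h1 := hcovC t htC htc
    refine Set.Subset.antisymm ?_ ?_
    · intro x hx
      exact mem_clause_vars.2
        ⟨L, hL, mem_lit_vars.2 ⟨u, hu, Term.hasVar_of_subterm hst hx⟩⟩
    · rw [h1]; exact hvarsDC
  have hgroundD : Clause.ground C → Clause.ground D := by
    intro hgr
    have hgr' : Clause.vars C = ∅ := hgr
    show Clause.vars D = ∅
    exact Set.subset_empty_iff.1 (by rw [← hgr']; exact hvarsDC)
  constructor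
  · rintro ⟨hsimpC, hcovC, hgr⟩
    have key := cond_key hsub hσ hsimpC hcovC
    have char := cond_vars_char hsub hσ hsimpC hcovC
    refine ⟨fun L hL => hsimpC L (hsub L hL), hcovD hsimpC hcovC, ?_⟩
    rcases hgr with hgr | ⟨L, hL, hneg, hflat, hvars⟩
    · exact Or.inl (hgroundD hgr)
    · right
      refine ⟨Lit.subst σ L, hinD L hL, hneg, ?_, ?_⟩
      · exact Lit.flat_subst hflat (fun z hz => key z (hvars ▸ hz))
      · ext x
        constructor
        · intro hx
          exact mem_clause_vars.2 ⟨Lit.subst σ L, hinD L hL, hx⟩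
        · intro hx
          rcases (char x).1 hx with ⟨z, hzC, hz⟩
          exact Lit.mem_vars_subst.2
            ⟨z, hvars ▸ hzC, by rw [hz]; exact .var x⟩
  · rintro ⟨hsimpC, hcovC, hgr⟩
    have key := cond_key hsub hσ hsimpC hcovC
    have char := cond_vars_char hsub hσ hsimpC hcovC
    refine ⟨fun L hL => hsimpC L (hsub L hL), hcovD hsimpC hcovC, ?_⟩
    rcases hgr with hgr | ⟨G, hG1, hG2, hG3⟩
    · exact Or.inl (hgroundD hgr)
    · right
      refine ⟨G.map (Lit.subst σ), ?_, ?_, ?_⟩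
      · intro L' hL'
        rcases List.mem_map.1 hL' with ⟨L, hLG, rfl⟩
        obtain ⟨hLC, hLneg, hLflat⟩ := hG1 L hLG
        exact ⟨hinD L hLC, hLneg,
          Lit.flat_subst hLflat
            (fun z hz => key z (mem_clause_vars.2 ⟨L, hLC, hz⟩))⟩
      · intro x hx
        rcases (char x).1 hx with ⟨z, hzC, hz⟩
        rcases hG2 z hzC with ⟨L, hLG, hzL⟩
        exact ⟨Lit.subst σ L, List.mem_map_of_mem hLG,
          Lit.mem_vars_subst.2 ⟨z, hzL, by rw [hz]; exact .var x⟩⟩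
      · intro x hx y hy hxy
        rcases (char x).1 hx with ⟨zx, hzxC, hzx⟩
        rcases (char y).1 hy with ⟨zy, hzyC, hzy⟩
        have hne : zx ≠ zy := by
          rintro rfl
          have h := hzx.symm.trans hzy
          injection h with h'
          exact hxy h'
        rcases hG3 zx hzxC zy hzyC hne with ⟨L, hLG, hzxL, hzyL⟩
        exact ⟨Lit.subst σ L, List.mem_map_of_mem hLG,
          Lit.mem_vars_subst.2 ⟨zx, hzxL, by rw [hzx]; exact .var x⟩,
          Lit.mem_vars_subst.2 ⟨zy, hzyL, by rw [hzy]; exact .var y⟩⟩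

end QGF
end

section
/- If the goal-oriented separation rule Sep is applicable to a query clause C ∨ A ∨ D — where A is a literal containing both isolated variables and chained variables, Var(C) ⊆ Var(A), x̄ = Var(A) ∩ Var(D), and d_s is a fresh predicate symbol — then the conclusion C ∨ A ∨ d_s(x̄) is a guarded clause and the conclusion ¬d_s(x̄) ∨ D is a query clause. -/
/-!
Common formalization of first-order clausal logic (without equality), following
"Resolution-based query answering and rewriting for the (loosely) guarded fragment".
-/

set_option linter.unusedVariables false

namespace QGF

lemma flatArg_simpleArg {t : Term} (h : t.flatArg) : t.simpleArg := by
  cases t with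
  | var x => trivial
  | app h' ts =>
    rcases h with h | h
    · exact h.elim
    · cases h' with
      | cn n =>
        cases ts with
        | nil => intro u hu; exact absurd hu List.not_mem_nil
        | cons a l => exact h.elim
      | fn n => exact h.elim
      | pr n => exact h.elim

lemma subterm_of_flat {s t : Term} (h : t.flatArg) (hs : s.SubtermOf t) : s = t := by
  cases hs with
  | refl => rfl
  | app hm hsub =>
    rename_i h' ts u
    rcases h with hv | hc
    · exact hv.elim
    · cases h' with
      | cn n =>
        cases ts with
        | nil => exact absurd hm List.not_mem_nil
        | cons a l => exact hc.elim
      | fn n => exact hc.elim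
      | pr n => exact hc.elim

lemma flat_not_compound {t : Term} (h : t.flatArg) : ¬ t.isCompound := by
  rintro ⟨h1, h2⟩
  rcases h with h | h
  · exact h1 h
  · exact h2 h

lemma flat_clause_covering {Q : Clause} (h : Clause.flat Q) : Clause.covering Q := by
  intro t ht hc
  rcases ht with ⟨L, hL, u, hu, hsub⟩
  have hflat := h L hL u hu
  have := subterm_of_flat hflat hsub
  subst this
  exact absurd hc (flat_not_compound hflat)

lemma hasVar_var {x y : ℕ} : (Term.var y).HasVar x ↔ x = y := by
  constructor
  · intro h; cases h; rfl
  · rintro rfl; exact Term.HasVar.var x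

lemma vars_defAtom (ds : ℕ) (xs : List ℕ) :
    (Atom.mk ds (xs.map Term.var)).vars = {x | x ∈ xs} := by
  ext x
  simp only [Atom.vars, Set.mem_setOf_eq, List.mem_map]
  constructor
  · rintro ⟨t, ⟨y, hy, rfl⟩, hv⟩
    have : x = y := hasVar_var.mp hv
    exact this ▸ hy
  · intro hx
    exact ⟨Term.var x, ⟨x, hx, rfl⟩, hasVar_var.mpr rfl⟩

lemma defAtom_flat (ds : ℕ) (xs : List ℕ) : (Atom.mk ds (xs.map Term.var)).flat := by
  rintro t ht
  rcases List.mem_map.mp ht with ⟨y, hy, rfl⟩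
  exact Or.inl trivial

/-- Lemma E.2:  If the goal-oriented separation rule Sep is applicable
to a query clause `C ∨ A ∨ D` — where the literal `A` contains both isolated and
chained variables, `Var(C) ⊆ Var(A)`, `x̄ = Var(A) ∩ Var(D)` and `d_s` is a fresh
predicate symbol — then the conclusion `C ∨ A ∨ d_s(x̄)` is a guarded clause and the
conclusion `¬d_s(x̄) ∨ D` is a query clause. -/
theorem sep_on_query_clause (C D : Clause) (A : Lit) (ds : ℕ) (xs : List ℕ)
    (hquery : Clause.query (C ++ A :: D))
    (hiso : ∃ x ∈ A.vars, IsolatedVar (C ++ A :: D) x)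
    (hchained : ∃ x ∈ A.vars, ChainedVar (C ++ A :: D) x)
    (hCA : Clause.vars C ⊆ A.vars)
    (hxs : {x | x ∈ xs} = A.vars ∩ Clause.vars D)
    (hfresh : ds ∉ Clause.preds (C ++ A :: D)) :
    Clause.guarded (C ++ A :: [Lit.mkPos ⟨ds, xs.map Term.var⟩]) ∧
    Clause.query (Lit.mkNeg ⟨ds, xs.map Term.var⟩ :: D) := by
  obtain ⟨hflat, hneg⟩ := hquery
  have hAmem : A ∈ C ++ A :: D := List.mem_append.mpr (Or.inr (List.mem_cons_self))
  have hAflat : A.flat := hflat A hAmem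
  have hAneg : A.pos = false := hneg A hAmem
  -- the fresh positive literal
  set P : Lit := Lit.mkPos ⟨ds, xs.map Term.var⟩ with hP
  have hPvars : P.vars = {x | x ∈ xs} := vars_defAtom ds xs
  have hPflat : P.flat := defAtom_flat ds xs
  -- the guarded clause G = C ++ A :: [P]
  set G : Clause := C ++ A :: [P] with hG
  have hGflat : Clause.flat G := by
    intro L hL
    rcases List.mem_append.mp hL with hL | hL
    · exact hflat L (List.mem_append.mpr (Or.inl hL))
    · rcases List.mem_cons.mp hL with rfl | hL
      · exact hAflat
      · rcases List.mem_cons.mp hL with rfl | hL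
        · exact hPflat
        · exact absurd hL List.not_mem_nil
  have hGvars : A.vars = Clause.vars G := by
    ext x
    constructor
    · intro hx
      exact ⟨A, List.mem_append.mpr (Or.inr (List.mem_cons_self)), hx⟩
    · rintro ⟨L, hL, hx⟩
      rcases List.mem_append.mp hL with hL | hL
      · exact hCA ⟨L, hL, hx⟩
      · rcases List.mem_cons.mp hL with rfl | hL
        · exact hx
        · rcases List.mem_cons.mp hL with rfl | hL
          · have : x ∈ ({x | x ∈ xs} : Set ℕ) := hPvars ▸ hx
            rw [hxs] at this
            exact this.1
          · exact absurd hL List.not_mem_nil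
  constructor
  · refine ⟨fun L hL t ht => flatArg_simpleArg (hGflat L hL t ht),
      flat_clause_covering hGflat, Or.inr ⟨A, ?_, hAneg, hAflat, hGvars⟩⟩
    exact List.mem_append.mpr (Or.inr (List.mem_cons_self))
  · constructor
    · intro L hL
      rcases List.mem_cons.mp hL with rfl | hL
      · exact hPflat
      · exact hflat L (List.mem_append.mpr (Or.inr (List.mem_cons.mpr (Or.inr hL))))
    · intro L hL
      rcases List.mem_cons.mp hL with rfl | hL
      · rfl
      · exact hneg L (List.mem_append.mpr (Or.inr (List.mem_cons.mpr (Or.inr hL))))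
end QGF
end
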